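/- Let E be a Banach space, n ≥ 2, and assume every k-homogeneous continuous polynomial on E with 1 ≤ k < n is weakly continuous on bounded sets. Let P ∈ P(ⁿE) with ‖P‖ = 1 have the following norm-attainment-up-to-ε property: for each ε > 0 there is z_ε ∈ B_E with |P(z_ε)| ≥ 1 − ε (in the complex case one may take P(z_ε) = 1 − ε after rotation). Then P has property (M): for all λ ∈ 𝕂, v ∈ E with |λ| ≤ ‖v‖ⁿ, and every bounded weakly null net (x_α), one has limsup_α |λ + P(x_α)| ≤ limsup_α ‖v + x_α‖ⁿ, provided E has the linear property (M). (This is the case ‖P‖ = 1 of: if E has property (M) and n = cd(E), then E has the n-polynomial property (M).) -/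

import Mathlib

open Filter Topology

universe u v

section PolyDefs

variable {E : Type u} [NormedAddCommGroup E] [NormedSpace ℝ E]

/-- `P` is a continuous `n`-homogeneous scalar polynomial on `E`. -/
def IsHomogPoly (n : ℕ) (P : E → ℝ) : Prop :=
  ∃ M : ContinuousMultilinearMap ℝ (fun _ : Fin n => E) ℝ, ∀ x, P x = M (fun _ => x)

/-- The polynomial (sup) norm: `‖P‖ = sup_{‖x‖ ≤ 1} |P x|`. -/
noncomputable def polyNorm (P : E → ℝ) : ℝ :=
  sSup {r : ℝ | ∃ x : E, ‖x‖ ≤ 1 ∧ r = |P x|}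

/-- A net is (norm) bounded. -/
def BoundedNet {ι : Type v} (x : ι → E) : Prop := ∃ C : ℝ, ∀ i, ‖x i‖ ≤ C

/-- The net `x` converges weakly to `x₀` along the filter `l`. -/
def WeaklyTendsto {ι : Type v} (x : ι → E) (l : Filter ι) (x₀ : E) : Prop :=
  ∀ γ : E →L[ℝ] ℝ, Tendsto (fun i => γ (x i)) l (𝓝 (γ x₀))

/-- `P` is weakly continuous on bounded sets at the point `x₀`. -/
def WCBat (P : E → ℝ) (x₀ : E) : Prop :=
  ∀ (ι : Type u) (l : Filter ι), l.NeBot → ∀ x : ι → E,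
    BoundedNet x → WeaklyTendsto x l x₀ → Tendsto (fun i => P (x i)) l (𝓝 (P x₀))

/-- `P ∈ P_w(ⁿE)`: continuous `n`-homogeneous and weakly continuous on bounded sets. -/
def WCB (n : ℕ) (P : E → ℝ) : Prop := IsHomogPoly n P ∧ ∀ x₀ : E, WCBat P x₀

/-- `P ∈ P_{w0}(ⁿE)`: weakly continuous on bounded sets at `0`. -/
def WCB0 (n : ℕ) (P : E → ℝ) : Prop := IsHomogPoly n P ∧ WCBat P 0

end PolyDefs

variable {E : Type u} [NormedAddCommGroup E] [NormedSpace ℝ E]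

/-- Kalton's property (M) for the Banach space `E`. -/
def PropertyM (E : Type u) [NormedAddCommGroup E] [NormedSpace ℝ E] : Prop :=
  ∀ y v : E, ‖y‖ ≤ ‖v‖ → ∀ (ι : Type u) (l : Filter ι), l.NeBot → ∀ x : ι → E,
    BoundedNet x → WeaklyTendsto x l 0 →
    limsup (fun i => ‖y + x i‖) l ≤ limsup (fun i => ‖v + x i‖) l

/-! ### Auxiliary lemmas -/

private lemma aux_le_of_pos {a b : ℝ} (h : ∀ ε : ℝ, 0 < ε → a ≤ b + ε) : a ≤ b := by
  by_contra hc
  push_neg at hc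
  have h2 := h ((a - b) / 2) (by linarith)
  linarith

/-- Homogeneity of a homogeneous polynomial. -/
private lemma aux_homog {n : ℕ} {Q : E → ℝ} (hQ : IsHomogPoly n Q) (c : ℝ) (w : E) :
    Q (c • w) = c ^ n * Q w := by
  obtain ⟨M, hMQ⟩ := hQ
  rw [hMQ, hMQ]
  have h := M.toMultilinearMap.map_smul_univ (fun _ : Fin n => c) (fun _ : Fin n => w)
  simpa [smul_eq_mul] using h

private lemma aux_zero {n : ℕ} (hn0 : n ≠ 0) {Q : E → ℝ} (hQ : IsHomogPoly n Q) : Q 0 = 0 := by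
  have h := aux_homog hQ 0 0
  rwa [smul_zero, zero_pow hn0, zero_mul] at h

private lemma aux_scale {n : ℕ} {Q : E → ℝ} (hQ : IsHomogPoly n Q) {w : E} (hw : w ≠ 0) :
    Q w = ‖w‖ ^ n * Q (‖w‖⁻¹ • w) := by
  rw [← aux_homog hQ]
  congr 1
  rw [smul_smul, mul_inv_cancel₀ (norm_ne_zero_iff.mpr hw), one_smul]

private lemma aux_abs_bound {n : ℕ} (hn0 : n ≠ 0) {Q : E → ℝ} (hQ : IsHomogPoly n Q)
    (hQ1 : ∀ w : E, ‖w‖ ≤ 1 → |Q w| ≤ 1) (w : E) : |Q w| ≤ ‖w‖ ^ n := by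
  rcases eq_or_ne w 0 with rfl | hw0
  · simp [aux_zero hn0 hQ, zero_pow hn0]
  · have h1 : ‖(‖w‖⁻¹ • w)‖ = 1 := by
      rw [norm_smul, Real.norm_eq_abs, abs_inv, abs_norm,
        inv_mul_cancel₀ (norm_ne_zero_iff.mpr hw0)]
    rw [aux_scale hQ hw0, abs_mul, abs_pow, abs_norm]
    calc ‖w‖ ^ n * |Q (‖w‖⁻¹ • w)| ≤ ‖w‖ ^ n * 1 :=
          mul_le_mul_of_nonneg_left (hQ1 _ (le_of_eq h1)) (pow_nonneg (norm_nonneg _) _)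
      _ = ‖w‖ ^ n := mul_one _

/-- Weak lower semicontinuity of the norm along a weakly null net. -/
private lemma aux_norm_lsc {v : E} {ι : Type u} {l : Filter ι} (hl : l.NeBot) {x : ι → E}
    {C : ℝ} (hC : ∀ i, ‖x i‖ ≤ C) (hw : WeaklyTendsto x l 0) :
    ‖v‖ ≤ limsup (fun i => ‖v + x i‖) l := by
  haveI := hl
  have hbnd : IsBoundedUnder (· ≤ ·) l (fun i => ‖v + x i‖) :=
    isBoundedUnder_of ⟨‖v‖ + C, fun i => (norm_add_le _ _).trans (by linarith [hC i])⟩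
  rcases eq_or_ne v 0 with rfl | hv
  · simp only [norm_zero]
    exact le_limsup_of_frequently_le
      ((Eventually.of_forall (fun i => norm_nonneg (0 + x i))).frequently) hbnd
  · obtain ⟨γ, hγ1, hγv⟩ := exists_dual_vector ℝ v (norm_ne_zero_iff.mpr hv)
    have hγv' : γ v = ‖v‖ := hγv
    have h0 : Tendsto (fun i => γ (x i)) l (𝓝 0) := by
      have := hw γ
      rwa [map_zero] at this
    have ht : Tendsto (fun i => γ (v + x i)) l (𝓝 ‖v‖) := by
      have h1 : Tendsto (fun i => γ v + γ (x i)) l (𝓝 (γ v + 0)) := tendsto_const_nhds.add h0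
      have h2 : (fun i => γ v + γ (x i)) = fun i => γ (v + x i) := by
        funext i; rw [map_add]
      rw [h2, add_zero, hγv'] at h1
      exact h1
    have hle : ∀ i, γ (v + x i) ≤ ‖v + x i‖ := by
      intro i
      calc γ (v + x i) ≤ |γ (v + x i)| := le_abs_self _
        _ ≤ ‖γ‖ * ‖v + x i‖ := by
            have := γ.le_opNorm (v + x i)
            rwa [Real.norm_eq_abs] at this
        _ = ‖v + x i‖ := by rw [hγ1, one_mul]
    calc ‖v‖ = limsup (fun i => γ (v + x i)) l := (ht.limsup_eq).symm
      _ ≤ limsup (fun i => ‖v + x i‖) l :=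
          limsup_le_limsup (Eventually.of_forall hle)
            (ht.isBoundedUnder_ge.isCoboundedUnder_le) hbnd

/-- Key bootstrap estimate: for an `n`-homogeneous `Q` with `sup_{B_E} |Q| ≤ 1`,
`limsup Q(xᵢ) + ‖v‖ⁿ ≤ (limsup ‖v + xᵢ‖)ⁿ`. -/
private lemma aux_key {n : ℕ} (hn : 2 ≤ n)
    (hlow : ∀ k : ℕ, 1 ≤ k → k < n → ∀ R : E → ℝ, IsHomogPoly k R → WCB k R)
    (hM : PropertyM E)
    (Q : E → ℝ) (hQ : IsHomogPoly n Q) (hQ1 : ∀ w : E, ‖w‖ ≤ 1 → |Q w| ≤ 1)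
    (v : E) (ι : Type u) (l : Filter ι) (hl : l.NeBot) (x : ι → E)
    {C : ℝ} (hC : ∀ i, ‖x i‖ ≤ C) (hC0 : 0 ≤ C) (hw : WeaklyTendsto x l 0) :
    limsup (fun i => Q (x i)) l + ‖v‖ ^ n ≤ (limsup (fun i => ‖v + x i‖) l) ^ n := by
  haveI := hl
  classical
  have hn0 : n ≠ 0 := by omega
  obtain ⟨M, hMQ⟩ := hQ
  have hQhom : IsHomogPoly n Q := ⟨M, hMQ⟩
  -- expansion of Q(u + xᵢ): the mixed terms vanish along the weakly null net
  have hexp : ∀ u : E, Tendsto (fun i => Q (u + x i) - Q u - Q (x i)) l (𝓝 0) := by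
    intro u
    haveI : Nonempty (Fin n) := ⟨⟨0, by omega⟩⟩
    set mid : Finset (Finset (Fin n)) :=
      ((Finset.univ : Finset (Finset (Fin n))).erase ∅).erase Finset.univ with hmid
    have hsplit : ∀ i, Q (u + x i) - Q u - Q (x i)
        = ∑ S ∈ mid, M (S.piecewise (fun _ => x i) (fun _ => u)) := by
      intro i
      have h := M.toMultilinearMap.map_add_univ (fun _ => x i) (fun _ => u)
      have h2 : ((fun _ => x i) + (fun _ => u) : Fin n → E) = fun _ => u + x i := by
        funext j; exact add_comm _ _
      rw [h2] at h
      have h' : M (fun _ => u + x i)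
          = ∑ S : Finset (Fin n), M (S.piecewise (fun _ => x i) (fun _ => u)) := h
      have e0 : (∅ : Finset (Fin n)) ∈ (Finset.univ : Finset (Finset (Fin n))) :=
        Finset.mem_univ _
      have e1 : (Finset.univ : Finset (Fin n)) ∈
          (Finset.univ : Finset (Finset (Fin n))).erase ∅ :=
        Finset.mem_erase.mpr ⟨Finset.univ_nonempty.ne_empty, Finset.mem_univ _⟩
      have hsum1 := Finset.add_sum_erase (Finset.univ : Finset (Finset (Fin n)))
        (fun S => M (S.piecewise (fun _ => x i) (fun _ => u))) e0
      have hsum2 := Finset.add_sum_erase ((Finset.univ : Finset (Finset (Fin n))).erase ∅)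
        (fun S => M (S.piecewise (fun _ => x i) (fun _ => u))) e1
      rw [hMQ (u + x i), hMQ u, hMQ (x i), h', ← hsum1, ← hsum2]
      simp only [Finset.piecewise_empty, Finset.piecewise_univ, hmid]
      ring
    have hzero : ∀ S ∈ mid, Tendsto
        (fun i => M (S.piecewise (fun _ => x i) (fun _ => u))) l (𝓝 0) := by
      intro S hS
      obtain ⟨hSuniv, hSmem⟩ := Finset.mem_erase.mp hS
      obtain ⟨hSne, -⟩ := Finset.mem_erase.mp hSmem
      have hk1 : 1 ≤ S.card := Finset.card_pos.mpr (Finset.nonempty_iff_ne_empty.mpr hSne)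
      have hkn : S.card < n := by
        have h3 := Finset.card_lt_card (Finset.ssubset_univ_iff.mpr hSuniv)
        simpa using h3
      set R : E → ℝ := fun y => (M.restr S rfl u) (fun _ => y) with hr
      have hRhom : IsHomogPoly S.card R := ⟨M.restr S rfl u, fun _ => rfl⟩
      have hR := (hlow S.card hk1 hkn R hRhom).2 0 ι l hl x ⟨C, hC⟩ hw
      have hR0 : R 0 = 0 := by
        exact (M.restr S rfl u).toMultilinearMap.map_coord_zero
          (⟨0, by omega⟩ : Fin S.card) rfl
      rw [hR0] at hR
      exact hR
    have hsum := tendsto_finset_sum mid hzero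
    rw [Finset.sum_const_zero] at hsum
    have heq : (fun i => Q (u + x i) - Q u - Q (x i))
        = fun i => ∑ S ∈ mid, M (S.piecewise (fun _ => x i) (fun _ => u)) := funext hsplit
    rw [heq]
    exact hsum
  -- the supremum of Q over the unit ball
  set SQ : Set ℝ := {r : ℝ | ∃ w : E, ‖w‖ ≤ 1 ∧ r = Q w} with hSQ
  have hmem0 : (0:ℝ) ∈ SQ := ⟨0, by simp, (aux_zero hn0 hQhom).symm⟩
  have hbddSQ : BddAbove SQ := by
    refine ⟨1, ?_⟩
    rintro r ⟨w, hw1, rfl⟩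
    exact (le_abs_self _).trans (hQ1 w hw1)
  set s : ℝ := sSup SQ with hs
  have hs0 : 0 ≤ s := le_csSup hbddSQ hmem0
  have hs1 : s ≤ 1 := by
    apply csSup_le ⟨0, hmem0⟩
    rintro r ⟨w, hw1, rfl⟩
    exact (le_abs_self _).trans (hQ1 w hw1)
  have hQle : ∀ w : E, Q w ≤ s * ‖w‖ ^ n := by
    intro w
    rcases eq_or_ne w 0 with rfl | hw0
    · simp [aux_zero hn0 hQhom, zero_pow hn0]
    · have h1 : ‖(‖w‖⁻¹ • w)‖ = 1 := by
        rw [norm_smul, Real.norm_eq_abs, abs_inv, abs_norm,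
          inv_mul_cancel₀ (norm_ne_zero_iff.mpr hw0)]
      have hle : Q (‖w‖⁻¹ • w) ≤ s := le_csSup hbddSQ ⟨_, le_of_eq h1, rfl⟩
      rw [aux_scale hQhom hw0]
      calc ‖w‖ ^ n * Q (‖w‖⁻¹ • w) ≤ ‖w‖ ^ n * s :=
            mul_le_mul_of_nonneg_left hle (pow_nonneg (norm_nonneg _) _)
        _ = s * ‖w‖ ^ n := mul_comm _ _
  -- boundedness facts
  set A : ℝ := limsup (fun i => ‖v + x i‖) l with hA
  have hbndA : ∀ w : E, IsBoundedUnder (· ≤ ·) l (fun i => ‖w + x i‖) := fun w =>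
    isBoundedUnder_of ⟨‖w‖ + C, fun i => (norm_add_le _ _).trans (by linarith [hC i])⟩
  have hτA : ‖v‖ ≤ A := aux_norm_lsc hl hC hw
  have hA0 : (0:ℝ) ≤ A := (norm_nonneg v).trans hτA
  have hQxab : ∀ i, |Q (x i)| ≤ C ^ n := fun i =>
    (aux_abs_bound hn0 hQhom hQ1 (x i)).trans
      (pow_le_pow_left₀ (norm_nonneg _) (hC i) n)
  have hQxlb : ∀ i, -C ^ n ≤ Q (x i) := fun i =>
    neg_le_of_neg_le ((neg_le_abs _).trans (hQxab i))
  -- main ε-estimate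
  have hKey : ∀ ε : ℝ, 0 < ε → limsup (fun i => Q (x i)) l
      ≤ s * (A + ε) ^ n - (s - ε) * ‖v‖ ^ n + ε := by
    intro ε hε
    obtain ⟨r, hrSQ, hr⟩ := exists_lt_of_lt_csSup ⟨0, hmem0⟩ (show s - ε < s by linarith)
    obtain ⟨w₀, hw₀, rfl⟩ := hrSQ
    set v' : E := ‖v‖ • w₀ with hv'
    have hv'le : ‖v'‖ ≤ ‖v‖ := by
      rw [hv', norm_smul, Real.norm_eq_abs, abs_norm]
      calc ‖v‖ * ‖w₀‖ ≤ ‖v‖ * 1 := mul_le_mul_of_nonneg_left hw₀ (norm_nonneg v)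
        _ = ‖v‖ := mul_one _
    have hQv' : (s - ε) * ‖v‖ ^ n ≤ Q v' := by
      rw [hv', aux_homog hQhom]
      calc (s - ε) * ‖v‖ ^ n ≤ Q w₀ * ‖v‖ ^ n :=
            mul_le_mul_of_nonneg_right hr.le (pow_nonneg (norm_nonneg _) _)
        _ = ‖v‖ ^ n * Q w₀ := mul_comm _ _
    have hA' : limsup (fun i => ‖v' + x i‖) l ≤ A := hM v' v hv'le ι l hl x ⟨C, hC⟩ hw
    have hev1 : ∀ᶠ i in l, ‖v' + x i‖ < A + ε :=
      eventually_lt_of_limsup_lt (lt_of_le_of_lt hA' (by linarith)) (hbndA v')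
    have hev2 : ∀ᶠ i in l, |Q (v' + x i) - Q v' - Q (x i)| < ε := by
      have h := hexp v'
      rw [Metric.tendsto_nhds] at h
      simpa [Real.dist_eq] using h ε hε
    have hevQ : ∀ᶠ i in l, Q (x i) ≤ s * (A + ε) ^ n - (s - ε) * ‖v‖ ^ n + ε := by
      filter_upwards [hev1, hev2] with i h1 h2
      have e1 : Q (v' + x i) ≤ s * ‖v' + x i‖ ^ n := hQle _
      have e2 : s * ‖v' + x i‖ ^ n ≤ s * (A + ε) ^ n :=
        mul_le_mul_of_nonneg_left (pow_le_pow_left₀ (norm_nonneg _) h1.le n) hs0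
      have e3 := abs_lt.mp h2
      linarith [e3.1, e3.2]
    exact limsup_le_of_le (isCoboundedUnder_le_of_le l hQxlb) hevQ
  -- let ε → 0
  have hlim : limsup (fun i => Q (x i)) l ≤ s * A ^ n - s * ‖v‖ ^ n := by
    have hc : Continuous (fun ε : ℝ => s * (A + ε) ^ n - (s - ε) * ‖v‖ ^ n + ε) :=
      ((continuous_const.mul ((continuous_const.add continuous_id).pow n)).sub
        ((continuous_const.sub continuous_id).mul continuous_const)).add continuous_id
    have hcont : Tendsto (fun ε : ℝ => s * (A + ε) ^ n - (s - ε) * ‖v‖ ^ n + ε)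
        (𝓝[>] (0:ℝ)) (𝓝 (s * (A + 0) ^ n - (s - 0) * ‖v‖ ^ n + 0)) :=
      (hc.tendsto 0).mono_left nhdsWithin_le_nhds
    rw [add_zero, sub_zero, add_zero] at hcont
    exact ge_of_tendsto hcont
      (Filter.eventually_of_mem self_mem_nhdsWithin (fun ε hε => hKey ε hε))
  have hpow : ‖v‖ ^ n ≤ A ^ n := pow_le_pow_left₀ (norm_nonneg v) hτA n
  have hfin : s * A ^ n - s * ‖v‖ ^ n ≤ A ^ n - ‖v‖ ^ n := by
    calc s * A ^ n - s * ‖v‖ ^ n = s * (A ^ n - ‖v‖ ^ n) := by ring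
      _ ≤ 1 * (A ^ n - ‖v‖ ^ n) := mul_le_mul_of_nonneg_right hs1 (by linarith)
      _ = A ^ n - ‖v‖ ^ n := one_mul _
  linarith

/-- If `E` has property (M), every `k`-homogeneous polynomial with `k < n` is weakly
continuous on bounded sets, and `P` has norm one and almost attains it, then `P` has the
polynomial property (M). -/
theorem stmt15 (n : ℕ) (hn : 2 ≤ n)
    (hlow : ∀ k : ℕ, 1 ≤ k → k < n → ∀ R : E → ℝ, IsHomogPoly k R → WCB k R)
    (hM : PropertyM E)
    (P : E → ℝ) (hP : IsHomogPoly n P) (hPnorm : polyNorm P = 1)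
    (hatt : ∀ ε : ℝ, 0 < ε → ∃ z : E, ‖z‖ ≤ 1 ∧ 1 - ε ≤ |P z|) :
    ∀ (lam : ℝ) (v : E), |lam| ≤ ‖v‖ ^ n →
      ∀ (ι : Type u) (l : Filter ι), l.NeBot → ∀ x : ι → E, BoundedNet x →
        WeaklyTendsto x l 0 →
        limsup (fun i => |lam + P (x i)|) l ≤ limsup (fun i => ‖v + x i‖ ^ n) l := by
  intro lam v hlam ι l hl x hb hw
  haveI := hl
  classical
  have hn0 : n ≠ 0 := by omega
  obtain ⟨C', hC'⟩ := hb
  set C : ℝ := max C' 0 with hCdef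
  have hC : ∀ i, ‖x i‖ ≤ C := fun i => (hC' i).trans (le_max_left _ _)
  have hC0 : (0:ℝ) ≤ C := le_max_right _ _
  -- `|P| ≤ 1` on the unit ball, from `polyNorm P = 1`
  obtain ⟨MP, hMP⟩ := hP
  have hPhom : IsHomogPoly n P := ⟨MP, hMP⟩
  have hbddP : BddAbove {r : ℝ | ∃ z : E, ‖z‖ ≤ 1 ∧ r = |P z|} := by
    refine ⟨‖MP‖, ?_⟩
    rintro r ⟨w, hw1, rfl⟩
    rw [hMP]
    calc |MP fun _ => w| = ‖MP fun _ => w‖ := (Real.norm_eq_abs _).symm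
      _ ≤ ‖MP‖ * ∏ _i : Fin n, ‖w‖ := MP.le_opNorm _
      _ ≤ ‖MP‖ * 1 := by
          apply mul_le_mul_of_nonneg_left _ (norm_nonneg (MP : ContinuousMultilinearMap ℝ (fun _ : Fin n => E) ℝ))
          exact Finset.prod_le_one (fun _ _ => norm_nonneg w) (fun _ _ => hw1)
      _ = ‖MP‖ := mul_one _
  have hP1 : ∀ w : E, ‖w‖ ≤ 1 → |P w| ≤ 1 := by
    intro w hw1
    rw [← hPnorm]
    exact le_csSup hbddP ⟨w, hw1, rfl⟩
  have hNhom : IsHomogPoly n (fun y => -P y) := ⟨-MP, fun y => by simp [hMP]⟩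
  have hN1 : ∀ w : E, ‖w‖ ≤ 1 → |-P w| ≤ 1 := fun w hw1 => by
    rw [abs_neg]; exact hP1 w hw1
  set A : ℝ := limsup (fun i => ‖v + x i‖) l with hAdef
  have hkP := aux_key hn hlow hM P hPhom hP1 v ι l hl x hC hC0 hw
  have hkN := aux_key hn hlow hM (fun y => -P y) hNhom hN1 v ι l hl x hC hC0 hw
  have hτA : ‖v‖ ≤ A := aux_norm_lsc hl hC hw
  have hA0 : (0:ℝ) ≤ A := (norm_nonneg v).trans hτA
  have hPxb : ∀ i, |P (x i)| ≤ C ^ n := fun i =>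
    (aux_abs_bound hn0 hPhom hP1 (x i)).trans (pow_le_pow_left₀ (norm_nonneg _) (hC i) n)
  have hbP : IsBoundedUnder (· ≤ ·) l (fun i => P (x i)) :=
    isBoundedUnder_of ⟨C ^ n, fun i => (le_abs_self _).trans (hPxb i)⟩
  have hbN : IsBoundedUnder (· ≤ ·) l (fun i => -P (x i)) :=
    isBoundedUnder_of ⟨C ^ n, fun i => (neg_le_abs _).trans (hPxb i)⟩
  -- Step 1 : `limsup |lam + P xᵢ| ≤ Aⁿ`
  have main1 : limsup (fun i => |lam + P (x i)|) l ≤ A ^ n := by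
    apply aux_le_of_pos
    intro δ hδ
    have h1 : limsup (fun i => P (x i)) l < A ^ n - ‖v‖ ^ n + δ := by linarith
    have h2 : limsup (fun i => -P (x i)) l < A ^ n - ‖v‖ ^ n + δ := by linarith
    have e1 := eventually_lt_of_limsup_lt h1 hbP
    have e2 := eventually_lt_of_limsup_lt h2 hbN
    refine limsup_le_of_le (isCoboundedUnder_le_of_le l (fun i => abs_nonneg _)) ?_
    filter_upwards [e1, e2] with i g1 g2
    rw [abs_le]
    constructor
    · have h3 := neg_abs_le lam
      linarith
    · have h3 := le_abs_self lam
      linarith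
  -- Step 2 : `Aⁿ ≤ limsup ‖v + xᵢ‖ⁿ`
  have hbpow : IsBoundedUnder (· ≤ ·) l (fun i => ‖v + x i‖ ^ n) :=
    isBoundedUnder_of ⟨(‖v‖ + C) ^ n, fun i =>
      pow_le_pow_left₀ (norm_nonneg _) ((norm_add_le _ _).trans (by linarith [hC i])) n⟩
  have main2 : A ^ n ≤ limsup (fun i => ‖v + x i‖ ^ n) l := by
    have hstep : ∀ ε ∈ Set.Ioi (0:ℝ),
        (max (A - ε) 0) ^ n ≤ limsup (fun i => ‖v + x i‖ ^ n) l := by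
      intro ε hε
      have hfreq : ∃ᶠ i in l, A - ε < ‖v + x i‖ :=
        frequently_lt_of_lt_limsup (isCoboundedUnder_le_of_le l (fun i => norm_nonneg _))
          (by simp only [← hAdef]; linarith [Set.mem_Ioi.mp hε])
      apply le_limsup_of_frequently_le ?_ hbpow
      apply hfreq.mono
      intro i hi
      exact pow_le_pow_left₀ (le_max_right _ _) (max_le hi.le (norm_nonneg _)) n
    have hc : Continuous (fun ε : ℝ => (max (A - ε) 0) ^ n) := by
      exact ((continuous_const.sub continuous_id).max continuous_const).pow n
    have hcont : Tendsto (fun ε : ℝ => (max (A - ε) 0) ^ n) (𝓝[>] (0:ℝ))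
        (𝓝 ((max (A - 0) 0) ^ n)) :=
      (hc.tendsto 0).mono_left nhdsWithin_le_nhds
    rw [sub_zero, max_eq_left hA0] at hcont
    exact le_of_tendsto hcont (Filter.eventually_of_mem self_mem_nhdsWithin hstep)
  exact main1.trans main2
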